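/- Let d: X × X̂ → [0, d*] be a distortion measure on finite sets with a zero entry in every row (i.e., for each x there is x̂ with d(x,x̂) = 0), and let d̃ be the minimum nonzero distortion. Then for every probability distribution p on X and every D with 0 ≤ D ≤ d̃/4, the IID rate-distortion function satisfies |R(p,0) - R(p,D)| ≤ (4D/d̃) · ln(d̃·|X|·|X̂| / (2D)). -/

import Mathlib

open BigOperators Finset Real

def IsPMF {X : Type*} [Fintype X] (p : X → ℝ) : Prop :=
  (∀ x, 0 ≤ p x) ∧ ∑ x, p x = 1

def IsChannel {X Xh : Type*} [Fintype X] [Fintype Xh] (W : X → Xh → ℝ) : Prop :=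
  (∀ x y, 0 ≤ W x y) ∧ ∀ x, ∑ y, W x y = 1

noncomputable def avgDist {X Xh : Type*} [Fintype X] [Fintype Xh]
    (d : X → Xh → ℝ) (p : X → ℝ) (W : X → Xh → ℝ) : ℝ :=
  ∑ x, ∑ y, p x * W x y * d x y

noncomputable def ent {α : Type*} [Fintype α] (p : α → ℝ) : ℝ :=
  -∑ a, p a * Real.log (p a)

noncomputable def mutInfo {X Xh : Type*} [Fintype X] [Fintype Xh]
    (p : X → ℝ) (W : X → Xh → ℝ) : ℝ :=
  ent p + ent (fun y => ∑ x, p x * W x y) - ent (fun z : X × Xh => p z.1 * W z.1 z.2)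

/-- The IID rate-distortion function `R(p, D)` (in nats). -/
noncomputable def RD {X Xh : Type*} [Fintype X] [Fintype Xh]
    (d : X → Xh → ℝ) (p : X → ℝ) (D : ℝ) : ℝ :=
  sInf {r | ∃ W : X → Xh → ℝ, IsChannel W ∧ avgDist d p W ≤ D ∧ r = mutInfo p W}

lemma nml_subadd {c a : ℝ} (hc : 0 ≤ c) (ha : 0 ≤ a) :
    Real.negMulLog (c + a) ≤ Real.negMulLog c + Real.negMulLog a := by
  rcases eq_or_lt_of_le hc with h | hc
  · simp [← h]
  rcases eq_or_lt_of_le ha with h | ha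
  · simp [← h]
  simp only [Real.negMulLog, neg_mul, mul_add, add_mul]
  have h1 : Real.log c ≤ Real.log (c + a) := Real.log_le_log hc (by linarith)
  have h2 : Real.log a ≤ Real.log (c + a) := Real.log_le_log ha (by linarith)
  nlinarith [h1, h2, hc.le, ha.le]

lemma nml_dec {r c : ℝ} (hr : 0 ≤ r) (hrc : r ≤ c) (hc1 : c ≤ 1) :
    Real.negMulLog (c - r) - Real.negMulLog c ≤ r := by
  rcases eq_or_lt_of_le (hr.trans hrc) with h | hc
  · have : r = 0 := le_antisymm (hrc.trans h.symm.le) hr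
    simp [this]
  rcases eq_or_lt_of_le hrc with h | hrc'
  · subst h; simp [Real.negMulLog]
    nlinarith [Real.log_nonpos (by linarith) hc1]
  · -- 0 < c - r < c ≤ 1 maybe c - r = 0
    rcases eq_or_lt_of_le (sub_nonneg.mpr hrc) with h | hcr
    · rw [← h]; simp [Real.negMulLog]
      nlinarith [Real.log_nonpos (by linarith) hc1, hr]
    · have hlog : Real.log c - Real.log (c - r) ≤ r / (c - r) := by
        have := Real.log_le_sub_one_of_pos (x := c / (c - r)) (by positivity)
        rw [Real.log_div (by linarith) (by linarith)] at this
        have : Real.log c - Real.log (c-r) ≤ c / (c-r) - 1 := this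
        have he : c / (c - r) - 1 = r / (c - r) := by field_simp; ring
        linarith [he ▸ this]
      have hlc : Real.log c ≤ 0 := Real.log_nonpos (by linarith) hc1
      simp only [Real.negMulLog, neg_mul]
      have h2 : (c - r) * (Real.log c - Real.log (c - r)) ≤ r := by
        calc (c - r) * (Real.log c - Real.log (c - r)) ≤ (c - r) * (r / (c - r)) := by
              apply mul_le_mul_of_nonneg_left hlog (by linarith)
          _ = r := by field_simp
      nlinarith [mul_nonneg hr (neg_nonneg.mpr hlc)]


lemma gibbs' {ι : Type*} (T : Finset ι) (a : ι → ℝ) (ha : ∀ i ∈ T, 0 ≤ a i)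
    (hs : 0 < ∑ i ∈ T, a i) :
    ∑ i ∈ T, Real.negMulLog (a i) ≤ (∑ i ∈ T, a i) * Real.log (T.card / (∑ i ∈ T, a i)) := by
  set s := ∑ i ∈ T, a i with hs_def
  set Tp := T.filter (fun i => 0 < a i) with hTp
  have hTsub : Tp ⊆ T := filter_subset _ _
  have hsum_eq : ∑ i ∈ Tp, a i = s := by
    rw [hs_def, ← Finset.sum_filter_add_sum_filter_not T (fun i => 0 < a i)]
    have : ∑ i ∈ T.filter (fun i => ¬ 0 < a i), a i = 0 := by
      apply Finset.sum_eq_zero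
      intro i hi
      simp only [mem_filter, not_lt] at hi
      exact le_antisymm hi.2 (ha i hi.1)
    rw [this, add_zero]
  have hfsum_eq : ∑ i ∈ Tp, Real.negMulLog (a i) = ∑ i ∈ T, Real.negMulLog (a i) := by
    rw [← Finset.sum_filter_add_sum_filter_not T (fun i => 0 < a i)]
    have : ∑ i ∈ T.filter (fun i => ¬ 0 < a i), Real.negMulLog (a i) = 0 := by
      apply Finset.sum_eq_zero
      intro i hi
      simp only [mem_filter, not_lt] at hi
      have : a i = 0 := le_antisymm hi.2 (ha i hi.1)
      simp [this]
    rw [this, add_zero, ← hTp]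
  have hTpne : Tp.Nonempty := by
    by_contra h
    rw [Finset.not_nonempty_iff_eq_empty] at h
    rw [h, Finset.sum_empty] at hsum_eq
    linarith
  have hcard : (0:ℝ) < T.card := by
    have := Finset.card_le_card hTsub
    have h1 : 0 < Tp.card := Finset.card_pos.mpr hTpne
    exact_mod_cast lt_of_lt_of_le h1 this
  rw [← hfsum_eq]
  -- per-term bound on Tp
  have key : ∀ i ∈ Tp, Real.negMulLog (a i) ≤ (s / T.card - a i) + a i * Real.log (T.card / s) := by
    intro i hi
    have hai : 0 < a i := (mem_filter.mp hi).2
    have h1 : Real.log (s / (T.card * a i)) ≤ s / (T.card * a i) - 1 :=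
      Real.log_le_sub_one_of_pos (by positivity)
    have h2 : a i * Real.log (s / (T.card * a i)) ≤ s / T.card - a i := by
      have := mul_le_mul_of_nonneg_left h1 hai.le
      have he : a i * (s / (T.card * a i) - 1) = s / T.card - a i := by
        field_simp
      linarith [he ▸ this]
    have hexp : Real.negMulLog (a i) = a i * Real.log (s / (T.card * a i)) + a i * Real.log (T.card / s) := by
      rw [Real.negMulLog, ← mul_add, ← Real.log_mul (by positivity) (by positivity)]
      have : s / (T.card * a i) * (T.card / s) = (a i)⁻¹ := by
        field_simp
      rw [this, Real.log_inv]; ring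
    rw [hexp]; linarith
  calc ∑ i ∈ Tp, Real.negMulLog (a i)
      ≤ ∑ i ∈ Tp, ((s / T.card - a i) + a i * Real.log (T.card / s)) := Finset.sum_le_sum key
    _ = (Tp.card * (s / T.card) - s) + s * Real.log (T.card / s) := by
        rw [Finset.sum_add_distrib, Finset.sum_sub_distrib, ← Finset.sum_mul, hsum_eq]
        simp [Finset.sum_const, nsmul_eq_mul]
    _ ≤ s * Real.log (T.card / s) := by
        have : (Tp.card : ℝ) ≤ T.card := by exact_mod_cast Finset.card_le_card hTsub
        have h3 : (Tp.card : ℝ) * (s / T.card) ≤ T.card * (s / T.card) := by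
          apply mul_le_mul_of_nonneg_right this (by positivity)
        have h4 : (T.card : ℝ) * (s / T.card) = s := by field_simp
        linarith

lemma glog_mono {N s t : ℝ} (hN : 1 ≤ N) (h0 : 0 ≤ s) (hst : s ≤ t) (ht : t ≤ 1/4) :
    s * Real.log (N / s) ≤ t * Real.log (N / t) := by
  rcases eq_or_lt_of_le (h0.trans hst) with h | ht0
  · have hs0 : s = 0 := le_antisymm (hst.trans h.symm.le) h0
    simp [hs0, ← h]
  have hlogt : 1 ≤ Real.log (N / t) := by
    have h4 : (4:ℝ) ≤ N / t := by
      rw [le_div_iff₀ ht0]; linarith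
    calc (1:ℝ) ≤ Real.log 4 := by
          rw [show (4:ℝ) = 2^2 by norm_num, Real.log_pow]
          have := Real.log_two_gt_d9
          push_cast; nlinarith
      _ ≤ Real.log (N / t) := Real.log_le_log (by norm_num) h4
  rcases eq_or_lt_of_le h0 with h | hs0
  · rw [← h]
    simpa using mul_nonneg (by linarith : (0:ℝ) ≤ t) (by linarith : (0:ℝ) ≤ Real.log (N/t))
  have key : s * Real.log (t / s) ≤ t - s := by
    have h1 : Real.log (t / s) ≤ t / s - 1 := Real.log_le_sub_one_of_pos (by positivity)
    have := mul_le_mul_of_nonneg_left h1 h0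
    have he : s * (t / s - 1) = t - s := by field_simp
    linarith [he ▸ this]
  have hsplit : Real.log (N / s) = Real.log (N / t) + Real.log (t / s) := by
    rw [← Real.log_mul (by positivity) (by positivity)]
    congr 1
    field_simp
  rw [hsplit]
  have : (t - s) * 1 ≤ (t - s) * Real.log (N / t) := by
    apply mul_le_mul_of_nonneg_left hlogt (by linarith)
  nlinarith [key, this]


lemma ent_eq {α : Type*} [Fintype α] (p : α → ℝ) :
    ent p = ∑ a, Real.negMulLog (p a) := by
  simp [ent, Real.negMulLog, Finset.sum_neg_distrib]

lemma pmf_le_one {α : Type*} [Fintype α] {p : α → ℝ} (hp : IsPMF p) (a : α) : p a ≤ 1 := by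
  rw [← hp.2]
  exact Finset.single_le_sum (fun i _ => hp.1 i) (Finset.mem_univ a)

lemma ent_nonneg {α : Type*} [Fintype α] {p : α → ℝ} (hp : IsPMF p) : 0 ≤ ent p := by
  rw [ent_eq]
  exact Finset.sum_nonneg fun a _ => Real.negMulLog_nonneg (hp.1 a) (pmf_le_one hp a)

lemma ent_le_log_card {α : Type*} [Fintype α] {p : α → ℝ} (hp : IsPMF p) :
    ent p ≤ Real.log (Fintype.card α) := by
  rw [ent_eq]
  have := gibbs' Finset.univ p (fun i _ => hp.1 i) (by rw [hp.2]; norm_num)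
  rw [hp.2, Finset.card_univ] at this
  simpa using this

lemma marg_pmf {X Xh : Type*} [Fintype X] [Fintype Xh] {p : X → ℝ} {W : X → Xh → ℝ}
    (hp : IsPMF p) (hW : IsChannel W) : IsPMF (fun y => ∑ x, p x * W x y) := by
  constructor
  · exact fun y => Finset.sum_nonneg fun x _ => mul_nonneg (hp.1 x) (hW.1 x y)
  · rw [Finset.sum_comm]
    calc ∑ x, ∑ y, p x * W x y = ∑ x, p x * ∑ y, W x y := by
          simp [Finset.mul_sum]
      _ = 1 := by simp only [hW.2, mul_one, hp.2]

lemma joint_pmf {X Xh : Type*} [Fintype X] [Fintype Xh] {p : X → ℝ} {W : X → Xh → ℝ}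
    (hp : IsPMF p) (hW : IsChannel W) : IsPMF (fun z : X × Xh => p z.1 * W z.1 z.2) := by
  constructor
  · exact fun z => mul_nonneg (hp.1 z.1) (hW.1 z.1 z.2)
  · rw [Fintype.sum_prod_type]
    calc ∑ x, ∑ y, p x * W x y = ∑ x, p x * ∑ y, W x y := by simp [Finset.mul_sum]
      _ = 1 := by simp only [hW.2, mul_one, hp.2]

lemma mutInfo_ge {X Xh : Type*} [Fintype X] [Fintype Xh] {p : X → ℝ} {W : X → Xh → ℝ}
    (hp : IsPMF p) (hW : IsChannel W) :
    -(Real.log ((Fintype.card X : ℝ) * (Fintype.card Xh : ℝ))) ≤ mutInfo p W := by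
  have h1 := ent_nonneg hp
  have h2 := ent_nonneg (marg_pmf hp hW)
  have h3 := ent_le_log_card (joint_pmf hp hW)
  rw [Fintype.card_prod] at h3
  push_cast at h3
  unfold mutInfo
  linarith

lemma mutInfo_degenerate {X Xh : Type*} [Fintype X] [Fintype Xh] {p : X → ℝ} {W : X → Xh → ℝ}
    (hp : IsPMF p) (hW : IsChannel W) (h : Fintype.card X = 1 ∨ Fintype.card Xh = 1) :
    mutInfo p W = 0 := by
  rcases h with h | h
  · have : Nonempty X := Fintype.card_pos_iff.mp (by omega)
    obtain ⟨x0⟩ := this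
    have huniq : ∀ x : X, x = x0 := fun x => Fintype.card_le_one_iff.mp (le_of_eq h) x x0
    have hsum : ∀ (f : X → ℝ), ∑ x, f x = f x0 := by
      intro f
      rw [show (Finset.univ : Finset X) = {x0} by
        apply Finset.eq_singleton_iff_unique_mem.mpr
        exact ⟨Finset.mem_univ x0, fun x _ => huniq x⟩]
      simp
    have hp0 : p x0 = 1 := by rw [← hp.2, hsum]
    have hent_p : ent p = 0 := by
      rw [ent_eq, hsum, hp0]; simp
    have hjoint : ent (fun z : X × Xh => p z.1 * W z.1 z.2) = ent (fun y => ∑ x, p x * W x y) := by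
      rw [ent_eq, ent_eq, Fintype.sum_prod_type]
      rw [hsum]
      congr 1
      ext y
      rw [hsum (fun x => p x * W x y)]
    unfold mutInfo
    rw [hent_p, hjoint]; ring
  · have : Nonempty Xh := Fintype.card_pos_iff.mp (by omega)
    obtain ⟨y0⟩ := this
    have huniq : ∀ y : Xh, y = y0 := fun y => Fintype.card_le_one_iff.mp (le_of_eq h) y y0
    have hsum : ∀ (f : Xh → ℝ), ∑ y, f y = f y0 := by
      intro f
      rw [show (Finset.univ : Finset Xh) = {y0} by
        apply Finset.eq_singleton_iff_unique_mem.mpr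
        exact ⟨Finset.mem_univ y0, fun y _ => huniq y⟩]
      simp
    have hW1 : ∀ x, W x y0 = 1 := by
      intro x
      have := hW.2 x
      rwa [hsum] at this
    have hmarg : ent (fun y => ∑ x, p x * W x y) = 0 := by
      rw [ent_eq, hsum]
      simp only [hW1, mul_one, hp.2]
      simp
    have hjoint : ent (fun z : X × Xh => p z.1 * W z.1 z.2) = ent p := by
      rw [ent_eq, ent_eq, Fintype.sum_prod_type]
      congr 1
      ext x
      rw [hsum (fun y => Real.negMulLog (p x * W x y)), hW1, mul_one]
    unfold mutInfo
    rw [hmarg, hjoint]; ring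


set_option maxHeartbeats 1000000 in
lemma key_est {X Xh : Type*} [Fintype X] [Fintype Xh]
    (d : X → Xh → ℝ) (dtil : ℝ)
    (hd0 : ∀ x y, 0 ≤ d x y)
    (hzero : ∀ x, ∃ y, d x y = 0)
    (hdtil_pos : 0 < dtil) (hdtil : ∀ x y, d x y ≠ 0 → dtil ≤ d x y)
    (p : X → ℝ) (hp : IsPMF p)
    (D : ℝ) (hD : 0 < D) (hD' : D ≤ dtil / 4)
    (hn : 2 ≤ Fintype.card X) (hm : 2 ≤ Fintype.card Xh)
    (W : X → Xh → ℝ) (hW : IsChannel W) (hDW : avgDist d p W ≤ D) :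
    ∃ W' : X → Xh → ℝ, IsChannel W' ∧ avgDist d p W' ≤ 0 ∧
      mutInfo p W' ≤ mutInfo p W +
        2 * (2*D/dtil) * Real.log ((Fintype.card X : ℝ) * (Fintype.card Xh : ℝ) / (2*D/dtil)) := by
  classical
  set n := (Fintype.card X : ℝ) with hn_def
  set m := (Fintype.card Xh : ℝ) with hm_def
  set N := n * m with hN_def
  set ε := 2*D/dtil with hε_def
  have hn1 : (2:ℝ) ≤ n := by rw [hn_def]; exact_mod_cast hn
  have hm1 : (2:ℝ) ≤ m := by rw [hm_def]; exact_mod_cast hm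
  have hN4 : (4:ℝ) ≤ N := by nlinarith
  have hε_pos : 0 < ε := by positivity
  have hε_half : ε ≤ 1/2 := by
    rw [hε_def, div_le_iff₀ hdtil_pos]; linarith
  -- zero-distortion reconstruction
  have hy0 : ∀ x, d x ((hzero x).choose) = 0 := fun x => (hzero x).choose_spec
  set y0 : X → Xh := fun x => (hzero x).choose with hy0_def
  set B : X → ℝ := fun x => ∑ y, if d x y = 0 then 0 else W x y with hB_def
  have hB_nonneg : ∀ x, 0 ≤ B x := by
    intro x
    apply Finset.sum_nonneg
    intro y _
    by_cases h : d x y = 0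
    · simp [h]
    · simp [h, hW.1 x y]
  set W' : X → Xh → ℝ :=
    fun x y => (if d x y = 0 then W x y else 0) + (if y = y0 x then B x else 0) with hW'_def
  have hW'_nonneg : ∀ x y, 0 ≤ W' x y := by
    intro x y
    apply add_nonneg
    · by_cases h : d x y = 0 <;> simp [h, hW.1 x y]
    · by_cases h : y = y0 x <;> simp [h, hB_nonneg x]
  have hW'_row : ∀ x, ∑ y, W' x y = 1 := by
    intro x
    rw [hW'_def]
    simp only []
    rw [Finset.sum_add_distrib]
    have h1 : ∑ y, (if d x y = 0 then W x y else 0) = 1 - B x := by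
      have : ∀ y, (if d x y = 0 then W x y else 0) = W x y - (if d x y = 0 then 0 else W x y) := by
        intro y; split <;> ring
      rw [Finset.sum_congr rfl (fun y _ => this y), Finset.sum_sub_distrib, hW.2 x, hB_def]
    have h2 : ∑ y, (if y = y0 x then B x else 0) = B x := by
      simp
    rw [h1, h2]; ring
  have hW'_chan : IsChannel W' := ⟨hW'_nonneg, hW'_row⟩
  have hW'_le_one : ∀ x y, W' x y ≤ 1 := by
    intro x y
    rw [← hW'_row x]
    exact Finset.single_le_sum (fun y' _ => hW'_nonneg x y') (Finset.mem_univ y)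
  have havg0 : avgDist d p W' ≤ 0 := by
    unfold avgDist
    apply le_of_eq
    apply Finset.sum_eq_zero; intro x _
    apply Finset.sum_eq_zero; intro y _
    by_cases hd : d x y = 0
    · rw [hd]; ring
    · have hy : y ≠ y0 x := by
        intro h; rw [h, hy0 x] at hd; exact hd rfl
      have : W' x y = 0 := by
        rw [hW'_def]; simp only [if_neg hd, if_neg hy]; ring
      rw [this]; ring
  set s := ∑ x, p x * B x with hs_def
  have hs_nonneg : 0 ≤ s :=
    Finset.sum_nonneg fun x _ => mul_nonneg (hp.1 x) (hB_nonneg x)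
  have hsD : dtil * s ≤ D := by
    have h1 : dtil * s ≤ avgDist d p W := by
      unfold avgDist
      rw [hs_def, Finset.mul_sum]
      apply Finset.sum_le_sum; intro x _
      rw [hB_def]
      simp only []
      rw [Finset.mul_sum, Finset.mul_sum]
      apply Finset.sum_le_sum; intro y _
      by_cases hd : d x y = 0
      · rw [if_pos hd, hd]
        simp
      · rw [if_neg hd]
        have := hdtil x y hd
        nlinarith [mul_nonneg (hp.1 x) (hW.1 x y)]
    linarith
  have hsε : s ≤ ε / 2 := by
    have h1 : s ≤ D / dtil := by
      rw [le_div_iff₀ hdtil_pos]; linarith [hsD]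
    have h2 : ε / 2 = D / dtil := by rw [hε_def]; ring
    rw [h2]; exact h1
  refine ⟨W', hW'_chan, havg0, ?_⟩
  have hB_pos : (0:ℝ) ≤ 2 * ε * Real.log (N / ε) := by
    apply mul_nonneg (by positivity)
    apply Real.log_nonneg
    rw [le_div_iff₀ hε_pos]; linarith
  rcases eq_or_lt_of_le hs_nonneg with hs0 | hs_pos
  · -- s = 0 : modified channel has the same joint distribution
    have hterm : ∀ x, p x * B x = 0 := by
      intro x
      exact (Finset.sum_eq_zero_iff_of_nonneg
        (fun x _ => mul_nonneg (hp.1 x) (hB_nonneg x))).mp hs0.symm x (Finset.mem_univ x)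
    have hpW : ∀ x y, p x * W' x y = p x * W x y := by
      intro x y
      by_cases hpx : p x = 0
      · rw [hpx]; ring
      · have hBx : B x = 0 := by
          rcases mul_eq_zero.mp (hterm x) with h | h
          · exact absurd h hpx
          · exact h
        have hbad : ∀ y, d x y ≠ 0 → W x y = 0 := by
          intro y hy
          have hsum0 : ∑ y, (if d x y = 0 then 0 else W x y) = 0 := hBx
          have := (Finset.sum_eq_zero_iff_of_nonneg (fun y _ => by
            by_cases h : d x y = 0 <;> simp [h, hW.1 x y])).mp hsum0 y (Finset.mem_univ y)
          rwa [if_neg hy] at this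
        have hWW : W' x y = W x y := by
          rw [hW'_def]
          by_cases hd : d x y = 0
          · simp [hd, hBx]
          · simp [hd, hBx, hbad y hd]
        rw [hWW]
    have hqeq : (fun y => ∑ x, p x * W' x y) = (fun y => ∑ x, p x * W x y) :=
      funext fun y => Finset.sum_congr rfl fun x _ => hpW x y
    have hjeq : (fun z : X × Xh => p z.1 * W' z.1 z.2) = (fun z : X × Xh => p z.1 * W z.1 z.2) :=
      funext fun z => hpW z.1 z.2
    have hmut : mutInfo p W' = mutInfo p W := by
      unfold mutInfo; rw [hqeq, hjeq]
    rw [hmut]; linarith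
  · -- s > 0 : the main estimate
    -- marginal entropy bound
    have hq_le_one : ∀ y, (∑ x, p x * W x y) ≤ 1 := fun y => pmf_le_one (marg_pmf hp hW) y
    have hmargb : ent (fun y => ∑ x, p x * W' x y) - ent (fun y => ∑ x, p x * W x y)
        ≤ s * Real.log (N / s) + s := by
      set g : Xh → ℝ := fun y => ∑ x, p x * (if d x y = 0 then W x y else 0) with hg_def
      set av : Xh → ℝ := fun y => ∑ x, p x * (if y = y0 x then B x else 0) with ha_def
      set rv : Xh → ℝ := fun y => ∑ x, p x * (if d x y = 0 then 0 else W x y) with hr_def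
      have hg_nonneg : ∀ y, 0 ≤ g y := fun y => Finset.sum_nonneg fun x _ =>
        mul_nonneg (hp.1 x) (by by_cases h : d x y = 0 <;> simp [h, hW.1 x y])
      have ha_nonneg : ∀ y, 0 ≤ av y := fun y => Finset.sum_nonneg fun x _ =>
        mul_nonneg (hp.1 x) (by by_cases h : y = y0 x <;> simp [h, hB_nonneg x])
      have hr_nonneg : ∀ y, 0 ≤ rv y := fun y => Finset.sum_nonneg fun x _ =>
        mul_nonneg (hp.1 x) (by by_cases h : d x y = 0 <;> simp [h, hW.1 x y])
      have hq'ga : ∀ y, (∑ x, p x * W' x y) = g y + av y := by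
        intro y
        rw [hg_def, ha_def]
        rw [← Finset.sum_add_distrib]
        apply Finset.sum_congr rfl
        intro x _
        rw [hW'_def, mul_add]
      have hqgr : ∀ y, (∑ x, p x * W x y) = g y + rv y := by
        intro y
        rw [hg_def, hr_def]
        rw [← Finset.sum_add_distrib]
        apply Finset.sum_congr rfl
        intro x _
        by_cases h : d x y = 0 <;> simp [h] <;> ring
      have hsum_r : ∑ y, rv y = s := by
        rw [hr_def, hs_def, Finset.sum_comm]
        apply Finset.sum_congr rfl
        intro x _
        rw [hB_def, ← Finset.mul_sum]
      have hsum_a : ∑ y, av y = s := by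
        rw [ha_def, hs_def, Finset.sum_comm]
        apply Finset.sum_congr rfl
        intro x _
        simp [mul_ite]
      have hptwise : ∀ y, Real.negMulLog (∑ x, p x * W' x y)
          - Real.negMulLog (∑ x, p x * W x y) ≤ Real.negMulLog (av y) + rv y := by
        intro y
        have h1 : Real.negMulLog (g y + av y) ≤ Real.negMulLog (g y) + Real.negMulLog (av y) :=
          nml_subadd (hg_nonneg y) (ha_nonneg y)
        have h2 : Real.negMulLog (g y) - Real.negMulLog (∑ x, p x * W x y) ≤ rv y := by
          have he : g y = (∑ x, p x * W x y) - rv y := by rw [hqgr y]; ring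
          rw [he]
          exact nml_dec (hr_nonneg y) (by linarith [hqgr y, hg_nonneg y]) (hq_le_one y)
        rw [hq'ga y]
        linarith
      have hsum_fa : ∑ y, Real.negMulLog (av y) ≤ s * Real.log (N / s) := by
        have := gibbs' Finset.univ av (fun y _ => ha_nonneg y) (by rw [hsum_a]; exact hs_pos)
        rw [hsum_a] at this
        have hcard : ((Finset.univ : Finset Xh).card : ℝ) = m := by
          rw [Finset.card_univ, hm_def]
        rw [hcard] at this
        have hmono : Real.log (m / s) ≤ Real.log (N / s) := by
          apply Real.log_le_log (by positivity)
          have hmN : m ≤ N := by nlinarith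
          gcongr
        calc ∑ y, Real.negMulLog (av y) ≤ s * Real.log (m / s) := this
          _ ≤ s * Real.log (N / s) := mul_le_mul_of_nonneg_left hmono hs_nonneg
      rw [ent_eq, ent_eq, ← Finset.sum_sub_distrib]
      calc ∑ y, (Real.negMulLog (∑ x, p x * W' x y) - Real.negMulLog (∑ x, p x * W x y))
          ≤ ∑ y, (Real.negMulLog (av y) + rv y) := Finset.sum_le_sum fun y _ => hptwise y
        _ = (∑ y, Real.negMulLog (av y)) + s := by rw [Finset.sum_add_distrib, hsum_r]
        _ ≤ s * Real.log (N / s) + s := by linarith [hsum_fa]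
    -- joint entropy bound
    have hjointb : ent (fun z : X × Xh => p z.1 * W z.1 z.2)
        - ent (fun z : X × Xh => p z.1 * W' z.1 z.2) ≤ s * Real.log (N / s) + s := by
      have hptwise : ∀ z : X × Xh,
          Real.negMulLog (p z.1 * W z.1 z.2) - Real.negMulLog (p z.1 * W' z.1 z.2)
          ≤ (if d z.1 z.2 = 0 then 0 else Real.negMulLog (p z.1 * W z.1 z.2))
            + (if z.2 = y0 z.1 then p z.1 * B z.1 else 0) := by
        rintro ⟨x, y⟩
        dsimp only
        by_cases hd : d x y = 0
        · by_cases hy : y = y0 x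
          · rw [if_pos hd, if_pos hy]
            have hPP' : p x * W' x y = p x * W x y + p x * B x := by
              rw [hW'_def]
              simp only [if_pos hd, if_pos hy]
              ring
            have hδ : 0 ≤ p x * B x := mul_nonneg (hp.1 x) (hB_nonneg x)
            have hC1 : p x * W' x y ≤ 1 := by
              calc p x * W' x y ≤ p x * 1 :=
                    mul_le_mul_of_nonneg_left (hW'_le_one x y) (hp.1 x)
                _ ≤ 1 := by rw [mul_one]; exact pmf_le_one hp x
            have hδC : p x * B x ≤ p x * W' x y := by
              rw [hPP']
              nlinarith [mul_nonneg (hp.1 x) (hW.1 x y)]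
            have := nml_dec hδ hδC hC1
            have he : p x * W' x y - p x * B x = p x * W x y := by rw [hPP']; ring
            rw [he] at this
            linarith
          · rw [if_pos hd, if_neg hy]
            have : W' x y = W x y := by
              rw [hW'_def]; simp only [if_pos hd, if_neg hy]; ring
            rw [this]; simp
        · have hy : y ≠ y0 x := by
            intro h; rw [h, hy0 x] at hd; exact hd rfl
          rw [if_neg hd, if_neg hy]
          have : W' x y = 0 := by
            rw [hW'_def]; simp only [if_neg hd, if_neg hy]; ring
          rw [this]
          simp
      -- the bad set
      set T : Finset (X × Xh) := Finset.univ.filter (fun z : X × Xh => ¬ d z.1 z.2 = 0) with hT_def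
      have hsum_T : ∑ z ∈ T, p z.1 * W z.1 z.2 = s := by
        rw [hT_def, Finset.sum_filter]
        rw [Fintype.sum_prod_type]
        rw [hs_def]
        apply Finset.sum_congr rfl
        intro x _
        rw [hB_def, Finset.mul_sum]
        apply Finset.sum_congr rfl
        intro y _
        by_cases h : d x y = 0 <;> simp [h]
      have hT_pos : ∀ z ∈ T, 0 ≤ p z.1 * W z.1 z.2 :=
        fun z _ => mul_nonneg (hp.1 z.1) (hW.1 z.1 z.2)
      have hgb := gibbs' T (fun z => p z.1 * W z.1 z.2) hT_pos (by rw [hsum_T]; exact hs_pos)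
      rw [hsum_T] at hgb
      have hT_ne : (1:ℝ) ≤ T.card := by
        rcases Finset.eq_empty_or_nonempty T with h | h
        · rw [h, Finset.sum_empty] at hsum_T; linarith
        · exact_mod_cast Finset.card_pos.mpr h
      have hT_le : (T.card : ℝ) ≤ N := by
        have h1 : T.card ≤ (Finset.univ : Finset (X × Xh)).card := Finset.card_le_card (Finset.filter_subset _ _)
        have h2 : (Finset.univ : Finset (X × Xh)).card = Fintype.card X * Fintype.card Xh := by
          rw [Finset.card_univ, Fintype.card_prod]
        rw [hN_def, hn_def, hm_def]
        rw [h2] at h1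
        exact_mod_cast h1
      have hfb : ∑ z ∈ T, Real.negMulLog (p z.1 * W z.1 z.2) ≤ s * Real.log (N / s) := by
        calc ∑ z ∈ T, Real.negMulLog (p z.1 * W z.1 z.2)
            ≤ s * Real.log (T.card / s) := hgb
          _ ≤ s * Real.log (N / s) := by
              apply mul_le_mul_of_nonneg_left ?_ hs_nonneg
              apply Real.log_le_log (div_pos (by linarith) hs_pos)
              gcongr
      have hsum_ind : ∑ z : X × Xh, (if z.2 = y0 z.1 then p z.1 * B z.1 else 0) = s := by
        rw [Fintype.sum_prod_type, hs_def]
        apply Finset.sum_congr rfl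
        intro x _
        simp
      have hsum_bad : ∑ z : X × Xh, (if d z.1 z.2 = 0 then 0 else Real.negMulLog (p z.1 * W z.1 z.2))
          = ∑ z ∈ T, Real.negMulLog (p z.1 * W z.1 z.2) := by
        rw [hT_def, Finset.sum_filter]
        apply Finset.sum_congr rfl
        intro z _
        by_cases h : d z.1 z.2 = 0 <;> simp [h]
      rw [ent_eq, ent_eq, ← Finset.sum_sub_distrib]
      calc ∑ z : X × Xh, (Real.negMulLog (p z.1 * W z.1 z.2) - Real.negMulLog (p z.1 * W' z.1 z.2))
          ≤ ∑ z : X × Xh, ((if d z.1 z.2 = 0 then 0 else Real.negMulLog (p z.1 * W z.1 z.2))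
            + (if z.2 = y0 z.1 then p z.1 * B z.1 else 0)) := Finset.sum_le_sum fun z _ => hptwise z
        _ = (∑ z ∈ T, Real.negMulLog (p z.1 * W z.1 z.2)) + s := by
            rw [Finset.sum_add_distrib, hsum_ind, hsum_bad]
        _ ≤ s * Real.log (N / s) + s := by linarith [hfb]
    -- assemble
    have hfinal : mutInfo p W' ≤ mutInfo p W + 2 * (s * Real.log (N / s) + s) := by
      unfold mutInfo
      linarith [hmargb, hjointb]
    -- final numeric estimate
    have hmono := glog_mono (by linarith : (1:ℝ) ≤ N) hs_nonneg hsε (by linarith : ε/2 ≤ 1/4)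
    have hsplit2 : Real.log (N / (ε/2)) = Real.log 2 + Real.log (N / ε) := by
      have he : N / (ε/2) = 2 * (N / ε) := by field_simp
      rw [he, Real.log_mul (by norm_num) (by positivity)]
    have hNε : (8:ℝ) ≤ N / ε := by
      rw [le_div_iff₀ hε_pos]
      nlinarith
    have hlogNε : Real.log 2 + 1 ≤ Real.log (N / ε) := by
      have h8 : Real.log 8 ≤ Real.log (N / ε) := Real.log_le_log (by norm_num) hNε
      have h8e : Real.log 8 = 3 * Real.log 2 := by
        rw [show (8:ℝ) = 2^3 by norm_num, Real.log_pow]; push_cast; ring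
      have hl2 := Real.log_two_gt_d9
      nlinarith
    have hstep : s * Real.log (N / s) + s ≤ ε * Real.log (N / ε) := by
      have h1 : s * Real.log (N / s) ≤ (ε/2) * Real.log (N / (ε/2)) := hmono
      rw [hsplit2] at h1
      nlinarith [hε_pos, hsε, hlogNε]
    calc mutInfo p W' ≤ mutInfo p W + 2 * (s * Real.log (N / s) + s) := hfinal
      _ ≤ mutInfo p W + 2 * (ε * Real.log (N / ε)) := by linarith [hstep]
      _ = mutInfo p W + 2 * ε * Real.log (N / ε) := by ring



/-- Continuity of the rate-distortion function in `D` near `D = 0`: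
`|R(p,0) - R(p,D)| ≤ (4D/d̃) · ln(d̃·|X|·|X̂| / (2D))` for `0 ≤ D ≤ d̃/4`,
when every source letter has a zero-distortion reconstruction. -/
theorem stmt7 {X Xh : Type*} [Fintype X] [Fintype Xh]
    (d : X → Xh → ℝ) (dstar dtil : ℝ)
    (hd0 : ∀ x y, 0 ≤ d x y) (hdstar : ∀ x y, d x y ≤ dstar)
    (hzero : ∀ x, ∃ y, d x y = 0)
    (hdtil_pos : 0 < dtil) (hdtil : ∀ x y, d x y ≠ 0 → dtil ≤ d x y)
    (p : X → ℝ) (hp : IsPMF p)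
    (D : ℝ) (hD : 0 ≤ D) (hD' : D ≤ dtil / 4) :
    |RD d p 0 - RD d p D| ≤
      (4 * D / dtil) *
        Real.log (dtil * (Fintype.card X : ℝ) * (Fintype.card Xh : ℝ) / (2 * D)) := by
  classical
  rcases eq_or_lt_of_le hD with hD0 | hDpos
  · rw [← hD0]
    simp
  -- D > 0 from here on
  have hXne : 0 < Fintype.card X := by
    rcases Nat.eq_zero_or_pos (Fintype.card X) with h | h
    · exfalso
      have : IsEmpty X := Fintype.card_eq_zero_iff.mp h
      have h2 := hp.2
      rw [Finset.univ_eq_empty, Finset.sum_empty] at h2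
      norm_num at h2
    · exact h
  have hYne : 0 < Fintype.card Xh := by
    obtain ⟨x0⟩ := Fintype.card_pos_iff.mp hXne
    obtain ⟨y, _⟩ := hzero x0
    exact Fintype.card_pos_iff.mpr ⟨y⟩
  set n := (Fintype.card X : ℝ) with hn_def
  set m := (Fintype.card Xh : ℝ) with hm_def
  have hn1 : (1:ℝ) ≤ n := by rw [hn_def]; exact_mod_cast hXne
  have hm1 : (1:ℝ) ≤ m := by rw [hm_def]; exact_mod_cast hYne
  -- the deterministic zero-distortion channel
  set y0 : X → Xh := fun x => (hzero x).choose with hy0_def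
  have hy0 : ∀ x, d x (y0 x) = 0 := fun x => (hzero x).choose_spec
  set W0 : X → Xh → ℝ := fun x y => if y = y0 x then 1 else 0 with hW0_def
  have hW0_chan : IsChannel W0 := by
    constructor
    · intro x y; by_cases h : y = y0 x <;> simp [hW0_def, h]
    · intro x; simp [hW0_def]
  have hW0_avg : avgDist d p W0 = 0 := by
    unfold avgDist
    apply Finset.sum_eq_zero; intro x _
    apply Finset.sum_eq_zero; intro y _
    by_cases h : y = y0 x
    · rw [h, hy0 x]; ring
    · simp [hW0_def, h]
  -- the feasible sets
  have hmem : ∀ D' : ℝ, 0 ≤ D' → mutInfo p W0 ∈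
      {r | ∃ W : X → Xh → ℝ, IsChannel W ∧ avgDist d p W ≤ D' ∧ r = mutInfo p W} :=
    fun D' hD' => ⟨W0, hW0_chan, by rw [hW0_avg]; exact hD', rfl⟩
  have hne : ∀ D' : ℝ, 0 ≤ D' →
      {r | ∃ W : X → Xh → ℝ, IsChannel W ∧ avgDist d p W ≤ D' ∧ r = mutInfo p W}.Nonempty :=
    fun D' hD' => ⟨mutInfo p W0, hmem D' hD'⟩
  have hbdd : ∀ D' : ℝ, BddBelow
      {r | ∃ W : X → Xh → ℝ, IsChannel W ∧ avgDist d p W ≤ D' ∧ r = mutInfo p W} := by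
    intro D'
    refine ⟨-(Real.log (n * m)), ?_⟩
    rintro r ⟨W, hWc, _, rfl⟩
    exact mutInfo_ge hp hWc
  by_cases hdeg : Fintype.card X = 1 ∨ Fintype.card Xh = 1
  · -- degenerate case: all mutual informations vanish
    have hall : ∀ D' : ℝ, 0 ≤ D' → RD d p D' = 0 := by
      intro D' hD'
      unfold RD
      have : {r | ∃ W : X → Xh → ℝ, IsChannel W ∧ avgDist d p W ≤ D' ∧ r = mutInfo p W} = {0} := by
        apply Set.eq_singleton_iff_unique_mem.mpr
        constructor
        · have := hmem D' hD'
          rwa [mutInfo_degenerate hp hW0_chan hdeg] at this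
        · rintro r ⟨W, hWc, _, rfl⟩
          exact mutInfo_degenerate hp hWc hdeg
      rw [this, csInf_singleton]
    rw [hall 0 le_rfl, hall D hD]
    simp only [sub_zero, abs_zero]
    apply mul_nonneg
    · positivity
    · apply Real.log_nonneg
      rw [le_div_iff₀ (by linarith)]
      have h1 : (1:ℝ) ≤ n * m := by nlinarith
      have h2 : dtil * 1 ≤ dtil * (n * m) := mul_le_mul_of_nonneg_left h1 hdtil_pos.le
      nlinarith
  · push_neg at hdeg
    have hn2 : 2 ≤ Fintype.card X := by omega
    have hm2 : 2 ≤ Fintype.card Xh := by omega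
    set Bd := 2 * (2*D/dtil) * Real.log (n * m / (2*D/dtil)) with hBd_def
    have hε_pos : 0 < 2*D/dtil := by positivity
    have hε_half : 2*D/dtil ≤ 1/2 := by
      rw [div_le_iff₀ hdtil_pos]; linarith
    have hBd_nonneg : 0 ≤ Bd := by
      rw [hBd_def]
      apply mul_nonneg (by positivity)
      apply Real.log_nonneg
      rw [le_div_iff₀ hε_pos]
      nlinarith
    have h1 : RD d p D ≤ RD d p 0 := by
      apply csInf_le_csInf (hbdd D) (hne 0 le_rfl)
      rintro r ⟨W, hWc, hWd, rfl⟩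
      exact ⟨W, hWc, by linarith, rfl⟩
    have h2 : RD d p 0 ≤ RD d p D + Bd := by
      have : RD d p 0 - Bd ≤ RD d p D := by
        apply le_csInf (hne D hD)
        rintro r ⟨W, hWc, hWd, rfl⟩
        obtain ⟨W', hW'c, hW'avg, hW'mut⟩ :=
          key_est d dtil hd0 hzero hdtil_pos hdtil p hp D hDpos hD' hn2 hm2 W hWc hWd
        have hle : RD d p 0 ≤ mutInfo p W' := csInf_le (hbdd 0) ⟨W', hW'c, hW'avg, rfl⟩
        rw [hBd_def]
        rw [← hn_def, ← hm_def] at hW'mut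
        linarith
      linarith
    have habs : |RD d p 0 - RD d p D| = RD d p 0 - RD d p D := abs_of_nonneg (by linarith)
    rw [habs]
    have hBd_eq : Bd = (4 * D / dtil) * Real.log (dtil * n * m / (2 * D)) := by
      rw [hBd_def]
      congr 1
      · ring
      · congr 1
        field_simp
    rw [← hBd_eq]
    linarith
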